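/- Let Γ = aα⊗α + bβ⊗β + cγ⊗γ with α,β,γ an orthonormal basis of ℝ³. Then det(𝓘 + Γ) = det 𝓘 · [1 + a(α,𝓘^{-1}α) + b(β,𝓘^{-1}β) + c(γ,𝓘^{-1}γ) + (bc/det 𝓘)(α,𝓘α) + (ac/det 𝓘)(β,𝓘β) + (ab/det 𝓘)(γ,𝓘γ) + abc/det 𝓘]. -/

import Mathlib

open Matrix

lemma det_add_diag_aux (J : Matrix (Fin 3) (Fin 3) ℝ) (a b c : ℝ) :
    (J + Matrix.diagonal ![a, b, c]).det =
      J.det + a * J.adjugate 0 0 + b * J.adjugate 1 1 + c * J.adjugate 2 2 +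
        b * c * J 0 0 + a * c * J 1 1 + a * b * J 2 2 + a * b * c := by
  simp [Matrix.det_fin_three, Matrix.adjugate_fin_three, Matrix.diagonal_apply]
  ring

/-- **Determinant of the spherical-support inertia operator.** For
`Γ = aα⊗α + bβ⊗β + cγ⊗γ` with `α, β, γ` an orthonormal basis of `ℝ³`,
`det(𝓘 + Γ) = det 𝓘 · [1 + a(α,𝓘⁻¹α) + b(β,𝓘⁻¹β) + c(γ,𝓘⁻¹γ)
 + (bc/det 𝓘)(α,𝓘α) + (ac/det 𝓘)(β,𝓘β) + (ab/det 𝓘)(γ,𝓘γ) + abc/det 𝓘]`. -/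
theorem det_inertia_plus_rank_ones
    (I : Matrix (Fin 3) (Fin 3) ℝ) (hIsymm : I.IsSymm) (hIinv : IsUnit I.det)
    (a b c : ℝ) (α β γ : Fin 3 → ℝ)
    (hαα : α ⬝ᵥ α = 1) (hββ : β ⬝ᵥ β = 1) (hγγ : γ ⬝ᵥ γ = 1)
    (hαβ : α ⬝ᵥ β = 0) (hαγ : α ⬝ᵥ γ = 0) (hβγ : β ⬝ᵥ γ = 0) :
    (I + a • vecMulVec α α + b • vecMulVec β β + c • vecMulVec γ γ).det =
      I.det * (1 + a * (α ⬝ᵥ I⁻¹ *ᵥ α) + b * (β ⬝ᵥ I⁻¹ *ᵥ β) +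
        c * (γ ⬝ᵥ I⁻¹ *ᵥ γ) +
        (b * c / I.det) * (α ⬝ᵥ I *ᵥ α) +
        (a * c / I.det) * (β ⬝ᵥ I *ᵥ β) +
        (a * b / I.det) * (γ ⬝ᵥ I *ᵥ γ) +
        a * b * c / I.det) := by
  have hd : I.det ≠ 0 := hIinv.ne_zero
  set P : Matrix (Fin 3) (Fin 3) ℝ := Matrix.of ![α, β, γ] with hP
  have hβα : β ⬝ᵥ α = 0 := by rw [dotProduct_comm]; exact hαβ
  have hγα : γ ⬝ᵥ α = 0 := by rw [dotProduct_comm]; exact hαγ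
  have hγβ : γ ⬝ᵥ β = 0 := by rw [dotProduct_comm]; exact hβγ
  have hPPT : P * Pᵀ = 1 := by
    simp only [dotProduct, Fin.sum_univ_three] at hαα hββ hγγ hαβ hαγ hβγ hβα hγα hγβ
    ext i j
    fin_cases i <;> fin_cases j <;>
      simp [hP, Matrix.mul_apply, Matrix.one_apply, Matrix.transpose_apply,
        Fin.sum_univ_three, Matrix.vecHead, Matrix.vecTail] <;>
      linarith
  have hPTP : Pᵀ * P = 1 := mul_eq_one_comm.mp hPPT
  have hPinv : P⁻¹ = Pᵀ := Matrix.inv_eq_right_inv hPPT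
  have hPTinv : Pᵀ⁻¹ = P := Matrix.inv_eq_right_inv hPTP
  set J : Matrix (Fin 3) (Fin 3) ℝ := P * I * Pᵀ with hJ
  have hM : I + a • vecMulVec α α + b • vecMulVec β β + c • vecMulVec γ γ =
      Pᵀ * (J + Matrix.diagonal ![a, b, c]) * P := by
    rw [Matrix.mul_add, Matrix.add_mul, hJ]
    have h1 : Pᵀ * (P * I * Pᵀ) * P = I := by
      rw [show Pᵀ * (P * I * Pᵀ) * P = (Pᵀ * P) * I * (Pᵀ * P) by
        simp [Matrix.mul_assoc], hPTP]
      simp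
    have h2 : Pᵀ * Matrix.diagonal ![a, b, c] * P =
        a • vecMulVec α α + b • vecMulVec β β + c • vecMulVec γ γ := by
      ext i j
      simp [hP, Matrix.mul_apply, Matrix.diagonal_apply, vecMulVec_apply,
        Fin.sum_univ_three, Fin.sum_univ_succ]
      ring
    rw [h1, h2]
    abel
  have hdetP : P.det * P.det = 1 := by
    have := congrArg Matrix.det hPPT
    rwa [Matrix.det_mul, Matrix.det_transpose, Matrix.det_one] at this
  have hJdet : J.det = I.det := by
    rw [hJ, Matrix.det_mul, Matrix.det_mul, Matrix.det_transpose]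
    linear_combination I.det * hdetP
  have hJunit : IsUnit J.det := hJdet ▸ hIinv
  have hJinv : J⁻¹ = P * I⁻¹ * Pᵀ := by
    rw [hJ, Matrix.mul_inv_rev, Matrix.mul_inv_rev, hPinv, hPTinv,
      Matrix.mul_assoc]
  have hadj : ∀ i, J.adjugate i i = I.det * J⁻¹ i i := by
    intro i
    have := Matrix.inv_def J
    rw [this]
    simp [Ring.inverse_eq_inv', hJdet]
    field_simp
  have hJ00 : J 0 0 = α ⬝ᵥ I *ᵥ α := by
    simp [hJ, hP, Matrix.mul_apply, dotProduct, Matrix.mulVec,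
      Matrix.vecMul, Matrix.transpose_apply, Matrix.vecHead, Matrix.vecTail, Fin.sum_univ_three]
  have hJ11 : J 1 1 = β ⬝ᵥ I *ᵥ β := by
    simp [hJ, hP, Matrix.mul_apply, dotProduct, Matrix.mulVec,
      Matrix.vecMul, Matrix.transpose_apply, Matrix.vecHead, Matrix.vecTail, Fin.sum_univ_three]
  have hJ22 : J 2 2 = γ ⬝ᵥ I *ᵥ γ := by
    simp [hJ, hP, Matrix.mul_apply, dotProduct, Matrix.mulVec,
      Matrix.vecMul, Matrix.transpose_apply, Matrix.vecHead, Matrix.vecTail, Fin.sum_univ_three]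
  have hJi00 : J⁻¹ 0 0 = α ⬝ᵥ I⁻¹ *ᵥ α := by
    simp [hJinv, hP, Matrix.mul_apply, dotProduct, Matrix.mulVec,
      Matrix.vecMul, Matrix.transpose_apply, Matrix.vecHead, Matrix.vecTail, Fin.sum_univ_three]
    ring
  have hJi11 : J⁻¹ 1 1 = β ⬝ᵥ I⁻¹ *ᵥ β := by
    simp [hJinv, hP, Matrix.mul_apply, dotProduct, Matrix.mulVec,
      Matrix.vecMul, Matrix.transpose_apply, Matrix.vecHead, Matrix.vecTail, Fin.sum_univ_three]
    ring
  have hJi22 : J⁻¹ 2 2 = γ ⬝ᵥ I⁻¹ *ᵥ γ := by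
    simp [hJinv, hP, Matrix.mul_apply, dotProduct, Matrix.mulVec,
      Matrix.vecMul, Matrix.transpose_apply, Matrix.vecHead, Matrix.vecTail, Fin.sum_univ_three]
    ring
  rw [hM, Matrix.det_mul, Matrix.det_mul, Matrix.det_transpose,
    det_add_diag_aux, hadj, hadj, hadj, hJdet, hJ00, hJ11, hJ22,
    hJi00, hJi11, hJi22]
  have hdp : ∀ x : ℝ, P.det * x * P.det = x := fun x => by
    rw [mul_comm P.det x, mul_assoc, hdetP, mul_one]
  rw [hdp]
  field_simp
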